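/- Let R be a finite set of vectors in ℤ^n. Then there exist positive constants P and Q such that any two linear sets S = { s₀ + λ₁s₁ + ⋯ + λ_p s_p : λᵢ ∈ ℕ } and T = { t₀ + μ₁t₁ + ⋯ + μ_q t_q : μⱼ ∈ ℕ } whose generating vectors s₁,…,s_p, t₁,…,t_q all lie in R either do not intersect or have a common element of ℓ¹-norm less than P·(|s₀| + |t₀|) + Q. -/

import Mathlib

open scoped BigOperators

/-- The ℓ¹ (taxicab) norm on ℤ^n. -/
def norm1 {n : ℕ} (v : Fin n → ℤ) : ℤ := ∑ i, |v i|

/-- The linear subset of ℤ^n with constant s₀ and generating vectors s. -/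
def linSet {n p : ℕ} (s₀ : Fin n → ℤ) (s : Fin p → Fin n → ℤ) : Set (Fin n → ℤ) :=
  {v | ∃ lam : Fin p → ℕ, v = s₀ + ∑ i, (lam i : ℤ) • s i}

open Finset

section RatSolve

/-- If a rational linear system has a real solution, it has a rational solution. -/
lemma rat_sol_of_real_sol {ι κ : Type*} [Fintype ι] [Fintype κ]
    (M : ι → κ → ℚ) (b : κ → ℚ)
    (h : ∃ x : ι → ℝ, ∀ j, ∑ i, x i * (M i j : ℝ) = (b j : ℝ)) :
    ∃ x : ι → ℚ, ∀ j, ∑ i, x i * M i j = b j := by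
  classical
  by_cases hb : b ∈ Submodule.span ℚ (Set.range M)
  · obtain ⟨c, hc⟩ := (Submodule.mem_span_range_iff_exists_fun ℚ).1 hb
    exact ⟨c, fun j => by
      have := congrFun hc j
      simpa using this⟩
  · exfalso
    obtain ⟨f, hfb, hfmap⟩ :=
      Submodule.exists_dual_map_eq_bot_of_notMem hb inferInstance
    have hfM : ∀ i, f (M i) = 0 := by
      intro i
      have : f (M i) ∈ (Submodule.span ℚ (Set.range M)).map f :=
        Submodule.mem_map_of_mem (Submodule.subset_span ⟨i, rfl⟩)
      rw [hfmap] at this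
      exact (Submodule.mem_bot ℚ).1 this
    obtain ⟨x, hx⟩ := h
    -- represent f by a vector u
    set u : κ → ℚ := fun j => f (fun j' => if j = j' then (1:ℚ) else 0) with hu
    have hrep : ∀ v : κ → ℚ, f v = ∑ j, v j * u j := by
      intro v
      conv_lhs => rw [pi_eq_sum_univ v]
      rw [map_sum]
      refine Finset.sum_congr rfl fun j _ => ?_
      rw [map_smul]
      simp [hu, smul_eq_mul]
    have hreal : ((∑ j, b j * u j : ℚ) : ℝ) = 0 := by
      push_cast
      calc ∑ j, (b j : ℝ) * (u j : ℝ)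
          = ∑ j, (∑ i, x i * (M i j : ℝ)) * (u j : ℝ) := by
            refine Finset.sum_congr rfl fun j _ => ?_; rw [hx j]
        _ = ∑ j, ∑ i, x i * ((M i j : ℝ) * (u j : ℝ)) := by
            refine Finset.sum_congr rfl fun j _ => ?_
            rw [Finset.sum_mul]
            refine Finset.sum_congr rfl fun i _ => ?_
            ring
        _ = ∑ i, ∑ j, x i * ((M i j : ℝ) * (u j : ℝ)) := Finset.sum_comm
        _ = ∑ i, x i * ((∑ j, (M i j : ℝ) * (u j : ℝ))) := by
            refine Finset.sum_congr rfl fun i _ => ?_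
            rw [Finset.mul_sum]
        _ = ∑ i, x i * ((f (M i) : ℚ) : ℝ) := by
            refine Finset.sum_congr rfl fun i _ => ?_
            rw [hrep (M i)]
            push_cast
            ring_nf
        _ = 0 := by simp [hfM]
    rw [← hrep b] at hreal
    exact hfb (by exact_mod_cast hreal)

end RatSolve

lemma rat_mul_den_int (q : ℚ) (N : ℕ) (h : q.den ∣ N) :
    ((q.num * ((N / q.den : ℕ) : ℤ) : ℤ) : ℚ) = q * N := by
  have hd : (q.den : ℚ) ≠ 0 := by exact_mod_cast q.den_nz
  have hN : (q.den * (N / q.den) : ℕ) = N := Nat.mul_div_cancel' h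
  have hq : (q.num : ℚ) = q * q.den := (div_eq_iff hd).1 (Rat.num_div_den q)
  have hcast : ((q.num * ((N / q.den : ℕ) : ℤ) : ℤ) : ℚ)
      = (q.num : ℚ) * ((N / q.den : ℕ) : ℚ) := by
    rw [Int.cast_mul, Int.cast_natCast]
  have hN' : ((q.den : ℚ)) * ((N / q.den : ℕ) : ℚ) = N := by exact_mod_cast hN
  rw [hcast, hq]
  calc q * q.den * ((N / q.den : ℕ) : ℚ) = q * ((q.den : ℚ) * ((N / q.den : ℕ) : ℚ)) := by ring
    _ = q * N := by rw [hN']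

theorem gordan_alternative {n : ℕ} {ι : Type} [Fintype ι] (e : ι → Fin n → ℤ) :
    (∃ x : ι → ℕ, (∃ k, x k ≠ 0) ∧ ∑ k, (x k : ℤ) • e k = 0) ∨
    (∃ w : Fin n → ℤ, ∀ k, 1 ≤ ∑ i, w i * e k i) := by
  classical
  set er : ι → (Fin n → ℝ) := fun k i => (e k i : ℝ) with her
  by_cases h0 : (0 : Fin n → ℝ) ∈ convexHull ℝ (Set.range er)
  · -- there is a nontrivial nonnegative relation
    left
    obtain ⟨ι', hft, z, wgt, hz, hai, hwpos, hwsum, hcomb⟩ :=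
      eq_pos_convex_span_of_mem_convexHull h0
    letI : Fintype ι' := hft
    choose k hk using fun i : ι' => hz (Set.mem_range_self i)
    -- rational solution of the affine system
    set M : ι' → Option (Fin n) → ℚ := fun i o => o.elim 1 (fun j => (e (k i) j : ℚ)) with hM
    set b : Option (Fin n) → ℚ := fun o => o.elim 1 (fun _ => 0) with hb
    have hreal : ∃ x : ι' → ℝ, ∀ j, ∑ i, x i * (M i j : ℝ) = (b j : ℝ) := by
      refine ⟨wgt, fun o => ?_⟩
      match o with
      | none => simpa [hM, hb] using hwsum
      | some j =>
        have hc := congrFun hcomb j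
        simp only [Finset.sum_apply, Pi.smul_apply, smul_eq_mul, Pi.zero_apply] at hc
        simp only [hM, hb, Option.elim]
        push_cast
        rw [← hc]
        refine Finset.sum_congr rfl fun i _ => ?_
        rw [← hk i]
    obtain ⟨y, hy⟩ := rat_sol_of_real_sol M b hreal
    have hysum : ∑ i, y i = 1 := by simpa [hM, hb] using hy none
    have hyvec : ∀ j, ∑ i, y i * (e (k i) j : ℚ) = 0 := fun j => by
      simpa [hM, hb] using hy (some j)
    -- the rational weights coincide with the real ones, hence are positive
    have h1 : ∑ i, ((y i : ℝ)) = 1 := by exact_mod_cast hysum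
    have hcomb' : ∑ i, ((y i : ℝ)) • z i = 0 := by
      funext j
      rw [Finset.sum_apply]
      simp only [Pi.smul_apply, smul_eq_mul, Pi.zero_apply]
      have hz' : ∀ i, z i j = ((e (k i) j : ℤ) : ℝ) := by
        intro i; rw [← hk i]
      simp only [hz']
      exact_mod_cast hyvec j
    have hyr : wgt = (fun i => ((y i : ℝ))) := by
      refine (affineIndependent_iff_eq_of_fintype_affineCombination_eq ℝ z).1 hai
        wgt (fun i => ((y i : ℝ))) hwsum h1 ?_
      rw [Finset.affineCombination_eq_linear_combination _ _ _ hwsum,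
        Finset.affineCombination_eq_linear_combination _ _ _ h1, hcomb, hcomb']
    have hypos : ∀ i, 0 < y i := by
      intro i
      have : (0:ℝ) < ((y i : ℝ)) := by rw [← congrFun hyr i]; exact hwpos i
      exact_mod_cast this
    -- scale to natural numbers
    set N : ℕ := ∏ i, (y i).den with hNdef
    have hNd : ∀ i, (y i).den ∣ N := fun i => Finset.dvd_prod_of_mem _ (Finset.mem_univ i)
    have hNpos : 0 < (N : ℚ) := by
      have : 0 < N := Finset.prod_pos fun i _ => (y i).pos
      exact_mod_cast this
    set m : ι' → ℕ := fun i => ((y i).num * ((N / (y i).den : ℕ) : ℤ)).toNat with hm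
    have hmcast : ∀ i, ((m i : ℤ) : ℚ) = y i * N := by
      intro i
      have h2 : (((y i).num * ((N / (y i).den : ℕ) : ℤ) : ℤ) : ℚ) = y i * N :=
        rat_mul_den_int (y i) N (hNd i)
      have h3 : (0:ℤ) ≤ (y i).num * ((N / (y i).den : ℕ) : ℤ) := by
        have : (0:ℚ) ≤ y i * N := le_of_lt (mul_pos (hypos i) hNpos)
        rw [← h2] at this
        exact_mod_cast this
      rw [hm]
      simp only [Int.toNat_of_nonneg h3]
      exact h2
    have hmpos : ∀ i, 0 < m i := by
      intro i
      have : (0:ℚ) < ((m i : ℤ) : ℚ) := by rw [hmcast i]; exact mul_pos (hypos i) hNpos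
      exact_mod_cast this
    refine ⟨fun kk => ∑ i, if k i = kk then m i else 0, ?_, ?_⟩
    · have : Nonempty ι' := by
        by_contra hempty
        rw [not_nonempty_iff] at hempty
        rw [Finset.univ_eq_empty, Finset.sum_empty] at hysum
        norm_num at hysum
      obtain ⟨i₀⟩ := this
      refine ⟨k i₀, ?_⟩
      intro hzero
      rw [Finset.sum_eq_zero_iff] at hzero
      have := hzero i₀ (Finset.mem_univ i₀)
      rw [if_pos rfl] at this
      exact (hmpos i₀).ne' this
    · have hswap : ∑ kk, ((∑ i, if k i = kk then m i else 0 : ℕ) : ℤ) • e kk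
          = ∑ i, (m i : ℤ) • e (k i) := by
        calc ∑ kk, ((∑ i, if k i = kk then m i else 0 : ℕ) : ℤ) • e kk
            = ∑ kk, ∑ i, (if k i = kk then (m i : ℤ) else 0) • e kk := by
              refine Finset.sum_congr rfl fun kk _ => ?_
              rw [← Finset.sum_smul]
              congr 1
              push_cast
              rfl
          _ = ∑ i, ∑ kk, (if k i = kk then (m i : ℤ) else 0) • e kk := Finset.sum_comm
          _ = ∑ i, (m i : ℤ) • e (k i) := by
              refine Finset.sum_congr rfl fun i _ => ?_
              simp only [ite_smul, zero_smul]
              rw [Finset.sum_ite_eq Finset.univ (k i) (fun kk => (m i:ℤ) • e kk)]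
              simp
      rw [hswap]
      funext j
      rw [Finset.sum_apply]
      simp only [Pi.smul_apply, smul_eq_mul, Pi.zero_apply]
      have hmcastQ : ∀ i, ((m i : ℕ) : ℚ) = y i * N := by
        intro i
        have := hmcast i
        push_cast at this ⊢
        exact this
      have hQ0 : ((∑ i, (m i : ℤ) * e (k i) j : ℤ) : ℚ) = 0 := by
        push_cast
        calc ∑ i, ((m i : ℕ) : ℚ) * ((e (k i) j : ℤ) : ℚ)
            = ∑ i, (y i * N) * ((e (k i) j : ℤ) : ℚ) := by
              refine Finset.sum_congr rfl fun i _ => ?_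
              rw [hmcastQ i]
          _ = N * ∑ i, y i * ((e (k i) j : ℤ) : ℚ) := by
              rw [Finset.mul_sum]
              refine Finset.sum_congr rfl fun i _ => by ring
          _ = 0 := by rw [hyvec j]; ring
      exact_mod_cast hQ0
  · right
    by_cases hι : IsEmpty ι
    · exact ⟨0, fun kk => (hι.false kk).elim⟩
    rw [not_isEmpty_iff] at hι
    have hconv : Convex ℝ (convexHull ℝ (Set.range er)) := convex_convexHull ℝ _
    have hclosed : IsClosed (convexHull ℝ (Set.range er)) :=
      ((Set.finite_range er).isCompact_convexHull ℝ).isClosed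
    obtain ⟨f, u, hfu, hsep⟩ := geometric_hahn_banach_point_closed hconv hclosed h0
    have hu0 : 0 < u := by simpa using hfu
    have hfk : ∀ kk : ι, u < f (er kk) :=
      fun kk => hsep _ (subset_convexHull ℝ _ (Set.mem_range_self kk))
    set wr : Fin n → ℝ := fun i => f (fun i' => if i = i' then 1 else 0) with hwr
    have hrep : ∀ v : Fin n → ℝ, f v = ∑ i, v i * wr i := by
      intro v
      conv_lhs => rw [pi_eq_sum_univ v]
      rw [map_sum]
      refine Finset.sum_congr rfl fun i _ => ?_
      rw [map_smul]
      simp [hwr, smul_eq_mul]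
    set Bm : ℕ := Finset.univ.sup (fun kk : ι => ∑ i, (e kk i).natAbs) with hBm
    have hB : ∀ kk : ι, ∑ i, |(e kk i : ℝ)| ≤ (Bm : ℝ) := by
      intro kk
      have h1 : (∑ i, (e kk i).natAbs) ≤ Bm := by
        rw [hBm]; exact Finset.le_sup (f := fun kk : ι => ∑ i, (e kk i).natAbs) (Finset.mem_univ kk)
      calc ∑ i, |(e kk i : ℝ)| = ((∑ i, (e kk i).natAbs : ℕ) : ℝ) := by
            push_cast
            refine Finset.sum_congr rfl fun i _ => ?_
            rw [Nat.cast_natAbs]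
            norm_num
        _ ≤ (Bm : ℝ) := by exact_mod_cast h1
    set δ : ℝ := u / (2 * (Bm + 1)) with hδ
    have hδpos : 0 < δ := by
      apply div_pos hu0
      positivity
    choose q hq1 hq2 using fun i : Fin n =>
      exists_rat_btwn (show wr i - δ < wr i + δ by linarith)
    have hqr : ∀ kk : ι, 0 < ∑ i, (q i : ℝ) * (e kk i : ℝ) := by
      intro kk
      have hfek : u < ∑ i, (e kk i : ℝ) * wr i := by
        have := hfk kk
        rwa [hrep (er kk)] at this
      have hdiff : |∑ i, ((q i : ℝ) - wr i) * (e kk i : ℝ)| ≤ δ * (Bm + 1) := by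
        calc |∑ i, ((q i : ℝ) - wr i) * (e kk i : ℝ)|
            ≤ ∑ i, |((q i : ℝ) - wr i) * (e kk i : ℝ)| := Finset.abs_sum_le_sum_abs _ _
          _ ≤ ∑ i, δ * |(e kk i : ℝ)| := by
              refine Finset.sum_le_sum fun i _ => ?_
              rw [abs_mul]
              have h1 := hq1 i; have h2 := hq2 i
              have : |(q i : ℝ) - wr i| ≤ δ := by
                rw [abs_le]; constructor <;> linarith
              exact mul_le_mul_of_nonneg_right this (abs_nonneg _) |>.trans
                (mul_le_mul_of_nonneg_right le_rfl (abs_nonneg _))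
          _ = δ * ∑ i, |(e kk i : ℝ)| := by rw [Finset.mul_sum]
          _ ≤ δ * (Bm + 1) := by
              apply mul_le_mul_of_nonneg_left _ hδpos.le
              have := hB kk; linarith
      have hδB : δ * (Bm + 1) ≤ u / 2 := by
        rw [hδ]
        rw [div_mul_eq_mul_div, mul_comm]
        rw [div_le_div_iff₀ (by positivity) (by norm_num)]
        ring_nf
        nlinarith [hu0, (by positivity : (0:ℝ) < (Bm:ℝ) + 1)]
      have hsplit : ∑ i, (q i : ℝ) * (e kk i : ℝ)
          = (∑ i, (e kk i : ℝ) * wr i) + ∑ i, ((q i : ℝ) - wr i) * (e kk i : ℝ) := by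
        rw [← Finset.sum_add_distrib]
        refine Finset.sum_congr rfl fun i _ => by ring
      rw [hsplit]
      have := abs_le.1 hdiff
      linarith
    set N : ℕ := ∏ i, (q i).den with hN
    have hNd : ∀ i, (q i).den ∣ N := fun i => Finset.dvd_prod_of_mem _ (Finset.mem_univ i)
    refine ⟨fun i => (q i).num * ((N / (q i).den : ℕ) : ℤ), fun kk => ?_⟩
    have hcast : ∀ i, (((q i).num * ((N / (q i).den : ℕ) : ℤ) : ℤ) : ℚ) = q i * N :=
      fun i => rat_mul_den_int (q i) N (hNd i)
    have hQ : 0 < ∑ i, (q i : ℚ) * ((e kk i : ℤ) : ℚ) := by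
      have := hqr kk
      have hcq : ((∑ i, (q i : ℚ) * ((e kk i : ℤ) : ℚ) : ℚ) : ℝ)
          = ∑ i, (q i : ℝ) * (e kk i : ℝ) := by push_cast; rfl
      by_contra hle
      push_neg at hle
      have : ((∑ i, (q i : ℚ) * ((e kk i : ℤ) : ℚ) : ℚ) : ℝ) ≤ 0 := by exact_mod_cast hle
      rw [hcq] at this; linarith
    have hNpos : 0 < (N : ℚ) := by
      have : 0 < N := Finset.prod_pos fun i _ => (q i).pos
      exact_mod_cast this
    have hZ : 0 < ∑ i, ((q i).num * ((N / (q i).den : ℕ) : ℤ)) * e kk i := by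
      have hcast2 : ((∑ i, ((q i).num * ((N / (q i).den : ℕ) : ℤ)) * e kk i : ℤ) : ℚ)
          = (N : ℚ) * ∑ i, (q i : ℚ) * ((e kk i : ℤ) : ℚ) := by
        push_cast
        rw [Finset.mul_sum]
        refine Finset.sum_congr rfl fun i _ => ?_
        have := hcast i
        push_cast at this
        rw [this]
        ring
      have : (0:ℚ) < ((∑ i, ((q i).num * ((N / (q i).den : ℕ) : ℤ)) * e kk i : ℤ) : ℚ) := by
        rw [hcast2]; exact mul_pos hNpos hQ
      exact_mod_cast this
    have hZ' : 0 < ∑ i, (fun i => (q i).num * ((N / (q i).den : ℕ) : ℤ)) i * e kk i := hZ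
    omega

section Aux

variable {n : ℕ}

lemma norm1_nonneg (v : Fin n → ℤ) : 0 ≤ norm1 v :=
  Finset.sum_nonneg fun _ _ => abs_nonneg _

lemma norm1_add_le (u v : Fin n → ℤ) : norm1 (u + v) ≤ norm1 u + norm1 v := by
  rw [norm1, norm1, norm1, ← Finset.sum_add_distrib]
  exact Finset.sum_le_sum fun i _ => abs_add_le _ _

lemma norm1_sub_le (u v : Fin n → ℤ) : norm1 (u - v) ≤ norm1 u + norm1 v := by
  rw [norm1, norm1, norm1, ← Finset.sum_add_distrib]
  exact Finset.sum_le_sum fun i _ => abs_sub _ _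

lemma abs_apply_le_norm1 (v : Fin n → ℤ) (i : Fin n) : |v i| ≤ norm1 v := by
  rw [norm1]
  exact Finset.single_le_sum (f := fun i => |v i|) (fun _ _ => abs_nonneg _) (Finset.mem_univ i)

lemma abs_dot_le (w d : Fin n → ℤ) : |∑ i, w i * d i| ≤ norm1 w * norm1 d := by
  calc |∑ i, w i * d i| ≤ ∑ i, |w i * d i| := Finset.abs_sum_le_sum_abs _ _
    _ = ∑ i, |w i| * |d i| := Finset.sum_congr rfl fun i _ => abs_mul _ _
    _ ≤ ∑ i, |w i| * norm1 d := Finset.sum_le_sum fun i _ =>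
        mul_le_mul_of_nonneg_left (abs_apply_le_norm1 d i) (abs_nonneg _)
    _ = norm1 w * norm1 d := (Finset.sum_mul _ _ _).symm

lemma norm1_natsmul (k : ℕ) (c : Fin n → ℤ) : norm1 ((k : ℤ) • c) = (k : ℤ) * norm1 c := by
  rw [norm1, norm1, Finset.mul_sum]
  refine Finset.sum_congr rfl fun i _ => ?_
  rw [Pi.smul_apply, smul_eq_mul, abs_mul]
  congr 1
  exact abs_of_nonneg (Int.natCast_nonneg k)

lemma norm1_sum_smul_le (F : Finset (Fin n → ℤ)) (y : (Fin n → ℤ) → ℕ) :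
    norm1 (∑ c ∈ F, (y c : ℤ) • c) ≤ ∑ c ∈ F, (y c : ℤ) * norm1 c := by
  classical
  induction F using Finset.induction_on with
  | empty => simp [norm1]
  | insert _ _ hnot ih =>
    rename_i a Fs
    rw [Finset.sum_insert hnot, Finset.sum_insert hnot]
    calc norm1 ((y a : ℤ) • a + ∑ c ∈ Fs, (y c : ℤ) • c)
        ≤ norm1 ((y a : ℤ) • a) + norm1 (∑ c ∈ Fs, (y c : ℤ) • c) := norm1_add_le _ _
      _ ≤ (y a : ℤ) * norm1 a + ∑ c ∈ Fs, (y c : ℤ) * norm1 c := by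
          rw [norm1_natsmul]
          exact add_le_add_right ih _
      _ = _ := rfl

lemma dot_sum_smul (w : Fin n → ℤ) (F : Finset (Fin n → ℤ)) (y : (Fin n → ℤ) → ℤ) :
    (∑ i, w i * (∑ c ∈ F, y c • c) i) = ∑ c ∈ F, y c * ∑ i, w i * c i := by
  calc ∑ i, w i * (∑ c ∈ F, y c • c) i
      = ∑ i, ∑ c ∈ F, w i * (y c * c i) := by
        refine Finset.sum_congr rfl fun i _ => ?_
        rw [Finset.sum_apply, Finset.mul_sum]
        refine Finset.sum_congr rfl fun c _ => by
          rw [Pi.smul_apply, smul_eq_mul]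
    _ = ∑ c ∈ F, ∑ i, w i * (y c * c i) := Finset.sum_comm
    _ = ∑ c ∈ F, y c * ∑ i, w i * c i := by
        refine Finset.sum_congr rfl fun c _ => ?_
        rw [Finset.mul_sum]
        exact Finset.sum_congr rfl fun i _ => by ring

/-- Existence of a nonzero homogeneous relation supported on `(U, V)`. -/
def HasHom {n : ℕ} (U V : Finset (Fin n → ℤ)) : Prop :=
  ∃ h : ((Fin n → ℤ) → ℕ) × ((Fin n → ℤ) → ℕ),
    ((∃ c, h.1 c ≠ 0) ∨ (∃ c, h.2 c ≠ 0)) ∧ (∀ c, h.1 c ≠ 0 → c ∈ U) ∧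
    (∀ c, h.2 c ≠ 0 → c ∈ V) ∧
    ∑ c ∈ U, (h.1 c : ℤ) • c = ∑ c ∈ V, (h.2 c : ℤ) • c

lemma gordan_pair (U V : Finset (Fin n → ℤ)) :
    HasHom U V ∨ ∃ w : Fin n → ℤ,
      (∀ c ∈ U, 1 ≤ ∑ i, w i * c i) ∧ (∀ c ∈ V, ∑ i, w i * c i ≤ -1) := by
  classical
  have halt := gordan_alternative (ι := {c // c ∈ U} ⊕ {c // c ∈ V})
    (Sum.elim (fun u => (u : Fin n → ℤ)) (fun v => -(v : Fin n → ℤ)))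
  rcases halt with ⟨x, ⟨k, hk⟩, hsum⟩ | ⟨w, hw⟩
  · left
    refine ⟨(fun c => if hc : c ∈ U then x (Sum.inl ⟨c, hc⟩) else 0,
            fun c => if hc : c ∈ V then x (Sum.inr ⟨c, hc⟩) else 0), ?_, ?_, ?_, ?_⟩
    · rcases k with u | v
      · exact Or.inl ⟨(u : Fin n → ℤ), by simpa [dif_pos u.2] using hk⟩
      · exact Or.inr ⟨(v : Fin n → ℤ), by simpa [dif_pos v.2] using hk⟩
    · intro c hc
      dsimp only at hc
      by_contra hcu
      rw [dif_neg hcu] at hc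
      exact hc rfl
    · intro c hc
      dsimp only at hc
      by_contra hcv
      rw [dif_neg hcv] at hc
      exact hc rfl
    · have hU : ∑ c ∈ U, ((if hc : c ∈ U then x (Sum.inl ⟨c, hc⟩) else 0 : ℕ) : ℤ) • c
          = ∑ u : {c // c ∈ U}, (x (Sum.inl u) : ℤ) • (u : Fin n → ℤ) := by
        rw [← Finset.sum_coe_sort U
          (fun c => ((if hc : c ∈ U then x (Sum.inl ⟨c, hc⟩) else 0 : ℕ) : ℤ) • c)]
        refine Finset.sum_congr rfl fun u _ => ?_
        simp
      have hV : ∑ c ∈ V, ((if hc : c ∈ V then x (Sum.inr ⟨c, hc⟩) else 0 : ℕ) : ℤ) • c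
          = ∑ v : {c // c ∈ V}, (x (Sum.inr v) : ℤ) • (v : Fin n → ℤ) := by
        rw [← Finset.sum_coe_sort V
          (fun c => ((if hc : c ∈ V then x (Sum.inr ⟨c, hc⟩) else 0 : ℕ) : ℤ) • c)]
        refine Finset.sum_congr rfl fun v _ => ?_
        simp
      rw [Fintype.sum_sum_type] at hsum
      simp only [Sum.elim_inl, Sum.elim_inr, smul_neg] at hsum
      dsimp only
      rw [hU, hV]
      have h3 : ∑ v : {c // c ∈ V}, -((x (Sum.inr v) : ℤ) • (v : Fin n → ℤ))
          = -∑ v : {c // c ∈ V}, ((x (Sum.inr v) : ℤ) • (v : Fin n → ℤ)) :=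
        Finset.sum_neg_distrib _
      rw [h3, add_neg_eq_zero] at hsum
      exact hsum
  · right
    refine ⟨w, fun c hc => ?_, fun c hc => ?_⟩
    · have := hw (Sum.inl ⟨c, hc⟩)
      simpa using this
    · have h1 := hw (Sum.inr ⟨c, hc⟩)
      simp only [Sum.elim_inr, Pi.neg_apply, mul_neg] at h1
      rw [Finset.sum_neg_distrib] at h1
      linarith

end Aux

section Key

open scoped Classical

variable {n : ℕ}

noncomputable def homChoice (U V : Finset (Fin n → ℤ)) :
    ((Fin n → ℤ) → ℕ) × ((Fin n → ℤ) → ℕ) :=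
  if h : HasHom U V then h.choose else (0, 0)

lemma homChoice_spec {U V : Finset (Fin n → ℤ)} (h : HasHom U V) :
    ((∃ c, (homChoice U V).1 c ≠ 0) ∨ (∃ c, (homChoice U V).2 c ≠ 0)) ∧
    (∀ c, (homChoice U V).1 c ≠ 0 → c ∈ U) ∧
    (∀ c, (homChoice U V).2 c ≠ 0 → c ∈ V) ∧
    ∑ c ∈ U, ((homChoice U V).1 c : ℤ) • c = ∑ c ∈ V, ((homChoice U V).2 c : ℤ) • c := by
  rw [homChoice, dif_pos h]
  exact h.choose_spec

noncomputable def sepChoice (U V : Finset (Fin n → ℤ)) : Fin n → ℤ :=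
  if h : ∃ w : Fin n → ℤ, (∀ c ∈ U, 1 ≤ ∑ i, w i * c i) ∧ (∀ c ∈ V, ∑ i, w i * c i ≤ -1)
  then h.choose else 0

lemma sepChoice_spec {U V : Finset (Fin n → ℤ)} (hnot : ¬ HasHom U V) :
    (∀ c ∈ U, 1 ≤ ∑ i, sepChoice U V i * c i) ∧
    (∀ c ∈ V, ∑ i, sepChoice U V i * c i ≤ -1) := by
  have h := (gordan_pair U V).resolve_left hnot
  rw [sepChoice, dif_pos h]
  exact h.choose_spec

noncomputable def Dconst (R : Finset (Fin n → ℤ)) : ℕ :=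
  1 + R.powerset.sup (fun U => R.powerset.sup
    (fun V => R.sup (fun c => max ((homChoice U V).1 c) ((homChoice U V).2 c))))

lemma Dconst_pos (R : Finset (Fin n → ℤ)) : 0 < Dconst R := Nat.succ_le_iff.1 (Nat.le_add_right _ _)

lemma homChoice_lt_D {R U V : Finset (Fin n → ℤ)} (hU : U ⊆ R) (hV : V ⊆ R) (c : Fin n → ℤ) :
    (homChoice U V).1 c < Dconst R ∧ (homChoice U V).2 c < Dconst R := by
  classical
  by_cases hc : c ∈ R
  · have h2 : max ((homChoice U V).1 c) ((homChoice U V).2 c)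
        ≤ R.sup (fun c => max ((homChoice U V).1 c) ((homChoice U V).2 c)) :=
      Finset.le_sup (f := fun c => max ((homChoice U V).1 c) ((homChoice U V).2 c)) hc
    have h1 : R.sup (fun c => max ((homChoice U V).1 c) ((homChoice U V).2 c))
        ≤ R.powerset.sup (fun U => R.powerset.sup
          (fun V => R.sup (fun c => max ((homChoice U V).1 c) ((homChoice U V).2 c)))) := by
      refine le_trans ?_ (Finset.le_sup
        (f := fun U => R.powerset.sup
          (fun V => R.sup (fun c => max ((homChoice U V).1 c) ((homChoice U V).2 c))))
        (Finset.mem_powerset.2 hU))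
      exact Finset.le_sup
        (f := fun V => R.sup (fun c => max ((homChoice U V).1 c) ((homChoice U V).2 c)))
        (Finset.mem_powerset.2 hV)
    have h3 := le_trans h2 h1
    rw [Dconst]
    omega
  · by_cases hh : HasHom U V
    · obtain ⟨_, hs1, hs2, _⟩ := homChoice_spec hh
      constructor
      · rcases Nat.eq_zero_or_pos ((homChoice U V).1 c) with h | h
        · rw [h]; exact Dconst_pos R
        · exact absurd (hU (hs1 c h.ne')) hc
      · rcases Nat.eq_zero_or_pos ((homChoice U V).2 c) with h | h
        · rw [h]; exact Dconst_pos R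
        · exact absurd (hV (hs2 c h.ne')) hc
    · rw [homChoice, dif_neg hh]
      exact ⟨Dconst_pos R, Dconst_pos R⟩

noncomputable def Wconst (R : Finset (Fin n → ℤ)) : ℕ :=
  R.powerset.sup (fun U => R.powerset.sup (fun V => (norm1 (sepChoice U V)).toNat))

lemma sep_norm_le {R U V : Finset (Fin n → ℤ)} (hU : U ⊆ R) (hV : V ⊆ R) :
    norm1 (sepChoice U V) ≤ (Wconst R : ℤ) := by
  have h1 : (norm1 (sepChoice U V)).toNat ≤ Wconst R := by
    rw [Wconst]
    refine le_trans ?_ (Finset.le_sup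
      (f := fun U => R.powerset.sup (fun V => (norm1 (sepChoice U V)).toNat))
      (Finset.mem_powerset.2 hU))
    exact Finset.le_sup (f := fun V => (norm1 (sepChoice U V)).toNat) (Finset.mem_powerset.2 hV)
  have h2 := norm1_nonneg (sepChoice U V)
  omega

noncomputable def Cconst (R : Finset (Fin n → ℤ)) : ℕ := R.sup fun c => (norm1 c).toNat

lemma norm1_le_C {R : Finset (Fin n → ℤ)} {c : Fin n → ℤ} (hc : c ∈ R) :
    norm1 c ≤ (Cconst R : ℤ) := by
  have h1 : (norm1 c).toNat ≤ Cconst R := Finset.le_sup (f := fun c => (norm1 c).toNat) hc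
  have h2 := norm1_nonneg c
  omega

end Key

section KeyBound

open scoped Classical

variable {n : ℕ}

set_option maxHeartbeats 1000000 in
lemma key_bound (R Simg Timg : Finset (Fin n → ℤ)) (hS : Simg ⊆ R) (hT : Timg ⊆ R)
    (d : Fin n → ℤ)
    (hne : ∃ yz : ((Fin n → ℤ) → ℕ) × ((Fin n → ℤ) → ℕ),
      (∀ c, yz.1 c ≠ 0 → c ∈ Simg) ∧ (∀ c, yz.2 c ≠ 0 → c ∈ Timg) ∧
      (∑ c ∈ R, (yz.1 c : ℤ) • c) - (∑ c ∈ R, (yz.2 c : ℤ) • c) = d) :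
    ∃ yz : ((Fin n → ℤ) → ℕ) × ((Fin n → ℤ) → ℕ),
      (∀ c, yz.1 c ≠ 0 → c ∈ Simg) ∧ (∀ c, yz.2 c ≠ 0 → c ∈ Timg) ∧
      (∑ c ∈ R, (yz.1 c : ℤ) • c) - (∑ c ∈ R, (yz.2 c : ℤ) • c) = d ∧
      ∑ c ∈ R, ((yz.1 c : ℤ) + (yz.2 c : ℤ))
        ≤ (Wconst R : ℤ) * norm1 d
          + 2 * (R.card : ℤ) * (Dconst R : ℤ) * ((Wconst R : ℤ) * (Cconst R : ℤ) + 1) := by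
  classical
  set NS : Set ℕ := {N | ∃ yz : ((Fin n → ℤ) → ℕ) × ((Fin n → ℤ) → ℕ),
    ((∀ c, yz.1 c ≠ 0 → c ∈ Simg) ∧ (∀ c, yz.2 c ≠ 0 → c ∈ Timg) ∧
      (∑ c ∈ R, (yz.1 c : ℤ) • c) - (∑ c ∈ R, (yz.2 c : ℤ) • c) = d) ∧
    ∑ c ∈ R, (yz.1 c + yz.2 c) = N} with hNS
  have hNSne : NS.Nonempty := by
    obtain ⟨yz, hyz⟩ := hne
    exact ⟨∑ c ∈ R, (yz.1 c + yz.2 c), yz, hyz, rfl⟩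
  obtain ⟨⟨y, z⟩, ⟨hsup1, hsup2, heqd⟩, hFval⟩ := Nat.sInf_mem hNSne
  dsimp only at hsup1 hsup2 heqd hFval
  obtain ⟨U, hUmem⟩ : ∃ U : Finset (Fin n → ℤ), ∀ c, c ∈ U ↔ (c ∈ Simg ∧ Dconst R ≤ y c) :=
    ⟨Simg.filter (fun c => Dconst R ≤ y c), fun c => Finset.mem_filter⟩
  obtain ⟨V, hVmem⟩ : ∃ V : Finset (Fin n → ℤ), ∀ c, c ∈ V ↔ (c ∈ Timg ∧ Dconst R ≤ z c) :=
    ⟨Timg.filter (fun c => Dconst R ≤ z c), fun c => Finset.mem_filter⟩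
  have hUR : U ⊆ R := fun c hc => hS ((hUmem c).1 hc).1
  have hVR : V ⊆ R := fun c hc => hT ((hVmem c).1 hc).1
  -- no homogeneous relation supported on (U, V), by minimality
  have hnothom : ¬ HasHom U V := by
    intro hh
    obtain ⟨hnz, hh1, hh2, heqh⟩ := homChoice_spec hh
    set h1f : (Fin n → ℤ) → ℕ := (homChoice U V).1 with hh1f
    set h2f : (Fin n → ℤ) → ℕ := (homChoice U V).2 with hh2f
    have hle1 : ∀ c, h1f c ≤ y c := by
      intro c
      rcases Nat.eq_zero_or_pos (h1f c) with h | h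
      · omega
      · have hcU := hh1 c h.ne'
        have hd1 := ((hUmem c).1 hcU).2
        have hd2 : h1f c < Dconst R := (homChoice_lt_D hUR hVR c).1
        omega
    have hle2 : ∀ c, h2f c ≤ z c := by
      intro c
      rcases Nat.eq_zero_or_pos (h2f c) with h | h
      · omega
      · have hcV := hh2 c h.ne'
        have hd1 := ((hVmem c).1 hcV).2
        have hd2 : h2f c < Dconst R := (homChoice_lt_D hUR hVR c).2
        omega
    have hmemNS : (∑ c ∈ R, ((y c - h1f c) + (z c - h2f c))) ∈ NS := by
      refine ⟨(fun c => y c - h1f c, fun c => z c - h2f c), ⟨?_, ?_, ?_⟩, rfl⟩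
      · intro c hc
        dsimp only at hc
        exact hsup1 c (by omega)
      · intro c hc
        dsimp only at hc
        exact hsup2 c (by omega)
      · have hsub1 : ∑ c ∈ R, (((y c - h1f c : ℕ)) : ℤ) • c
            = ∑ c ∈ R, (y c : ℤ) • c - ∑ c ∈ R, (h1f c : ℤ) • c := by
          rw [← Finset.sum_sub_distrib]
          refine Finset.sum_congr rfl fun c _ => ?_
          rw [← sub_smul]
          congr 1
          exact_mod_cast Nat.cast_sub (hle1 c)
        have hsub2 : ∑ c ∈ R, (((z c - h2f c : ℕ)) : ℤ) • c
            = ∑ c ∈ R, (z c : ℤ) • c - ∑ c ∈ R, (h2f c : ℤ) • c := by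
          rw [← Finset.sum_sub_distrib]
          refine Finset.sum_congr rfl fun c _ => ?_
          rw [← sub_smul]
          congr 1
          exact_mod_cast Nat.cast_sub (hle2 c)
        have hresU : ∑ c ∈ R, (h1f c : ℤ) • c = ∑ c ∈ U, (h1f c : ℤ) • c := by
          refine (Finset.sum_subset hUR fun c _ hcU => ?_).symm
          have : h1f c = 0 := by
            by_contra hne0
            exact hcU (hh1 c hne0)
          rw [this, Nat.cast_zero, zero_smul]
        have hresV : ∑ c ∈ R, (h2f c : ℤ) • c = ∑ c ∈ V, (h2f c : ℤ) • c := by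
          refine (Finset.sum_subset hVR fun c _ hcV => ?_).symm
          have : h2f c = 0 := by
            by_contra hne0
            exact hcV (hh2 c hne0)
          rw [this, Nat.cast_zero, zero_smul]
        rw [hsub1, hsub2, hresU, hresV, heqh]
        rw [← heqd]
        ring
    have hlt : (∑ c ∈ R, ((y c - h1f c) + (z c - h2f c))) < ∑ c ∈ R, (y c + z c) := by
      apply Finset.sum_lt_sum
      · intro c _
        have := hle1 c; have := hle2 c
        omega
      · rcases hnz with ⟨c₀, hc₀⟩ | ⟨c₀, hc₀⟩
        · refine ⟨c₀, hUR (hh1 c₀ hc₀), ?_⟩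
          have := hle1 c₀; have := hle2 c₀
          omega
        · refine ⟨c₀, hVR (hh2 c₀ hc₀), ?_⟩
          have := hle1 c₀; have := hle2 c₀
          omega
    have := Nat.sInf_le hmemNS
    omega
  obtain ⟨hw1, hw2⟩ := sepChoice_spec hnothom
  set w : Fin n → ℤ := sepChoice U V with hwdef
  -- notation for the constants
  set r : ℤ := (R.card : ℤ) with hr
  set D' : ℤ := (Dconst R : ℤ) with hD'
  set W' : ℤ := (Wconst R : ℤ) with hW'
  set C' : ℤ := (Cconst R : ℤ) with hC'
  have hD'0 : 0 ≤ D' := Int.natCast_nonneg _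
  have hW'0 : 0 ≤ W' := Int.natCast_nonneg _
  have hC'0 : 0 ≤ C' := Int.natCast_nonneg _
  have hr0 : 0 ≤ r := Int.natCast_nonneg _
  have hwn : norm1 w ≤ W' := sep_norm_le hUR hVR
  have hdotle : ∀ c ∈ R, |∑ i, w i * c i| ≤ W' * C' := fun c hc =>
    le_trans (abs_dot_le w c)
      (mul_le_mul hwn (norm1_le_C hc) (norm1_nonneg c) (le_trans (norm1_nonneg w) hwn))
  -- the dot product identity
  have hYZ : ∑ i, w i * d i
      = (∑ c ∈ R, (y c : ℤ) * (∑ i, w i * c i))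
        - (∑ c ∈ R, (z c : ℤ) * (∑ i, w i * c i)) := by
    rw [← dot_sum_smul w R (fun c => (y c : ℤ)), ← dot_sum_smul w R (fun c => (z c : ℤ)),
      ← Finset.sum_sub_distrib]
    rw [← heqd]
    refine Finset.sum_congr rfl fun i _ => ?_
    rw [Pi.sub_apply]
    ring
  -- bounds for y-sums
  have hyRU : ∀ c ∈ R \ U, (y c : ℤ) ≤ D' := by
    intro c hc
    obtain ⟨hcR, hcU⟩ := Finset.mem_sdiff.1 hc
    rcases Nat.eq_zero_or_pos (y c) with h | h
    · rw [h, hD']; exact_mod_cast Nat.zero_le _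
    · have hcS : c ∈ Simg := hsup1 c h.ne'
      have hnge : ¬ (Dconst R ≤ y c) := by
        intro hge
        exact hcU ((hUmem c).2 ⟨hcS, hge⟩)
      have hle : y c ≤ Dconst R := (Nat.not_le.1 hnge).le
      rw [hD']
      exact_mod_cast hle
  have hzRV : ∀ c ∈ R \ V, (z c : ℤ) ≤ D' := by
    intro c hc
    obtain ⟨hcR, hcV⟩ := Finset.mem_sdiff.1 hc
    rcases Nat.eq_zero_or_pos (z c) with h | h
    · rw [h, hD']; exact_mod_cast Nat.zero_le _
    · have hcT : c ∈ Timg := hsup2 c h.ne'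
      have hnge : ¬ (Dconst R ≤ z c) := by
        intro hge
        exact hcV ((hVmem c).2 ⟨hcT, hge⟩)
      have hle : z c ≤ Dconst R := (Nat.not_le.1 hnge).le
      rw [hD']
      exact_mod_cast hle
  have hcardU : ((R \ U).card : ℤ) ≤ r := by
    rw [hr]
    exact_mod_cast Finset.card_le_card (Finset.sdiff_subset)
  have hcardV : ((R \ V).card : ℤ) ≤ r := by
    rw [hr]
    exact_mod_cast Finset.card_le_card (Finset.sdiff_subset)
  have hsplitY : ∑ c ∈ R, (y c : ℤ) * (∑ i, w i * c i)
      = ∑ c ∈ R \ U, (y c : ℤ) * (∑ i, w i * c i)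
        + ∑ c ∈ U, (y c : ℤ) * (∑ i, w i * c i) := (Finset.sum_sdiff hUR).symm
  have hsplitZ : ∑ c ∈ R, (z c : ℤ) * (∑ i, w i * c i)
      = ∑ c ∈ R \ V, (z c : ℤ) * (∑ i, w i * c i)
        + ∑ c ∈ V, (z c : ℤ) * (∑ i, w i * c i) := (Finset.sum_sdiff hVR).symm
  have hUlow : ∑ c ∈ U, (y c : ℤ) ≤ ∑ c ∈ U, (y c : ℤ) * (∑ i, w i * c i) :=
    Finset.sum_le_sum fun c hc =>
      le_mul_of_one_le_right (Int.natCast_nonneg _) (hw1 c hc)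
  have hVlow : ∑ c ∈ V, (z c : ℤ) * (∑ i, w i * c i) ≤ -∑ c ∈ V, (z c : ℤ) := by
    rw [← Finset.sum_neg_distrib]
    refine Finset.sum_le_sum fun c hc => ?_
    have := mul_le_mul_of_nonneg_left (hw2 c hc) (Int.natCast_nonneg (z c))
    linarith
  have habsterm : ∀ (u : (Fin n → ℤ) → ℕ) (c : Fin n → ℤ), c ∈ R → (u c : ℤ) ≤ D' →
      |(u c : ℤ) * (∑ i, w i * c i)| ≤ D' * (W' * C') := by
    intro u c hcR huD
    rw [abs_mul, abs_of_nonneg (Int.natCast_nonneg (u c))]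
    exact mul_le_mul huD (hdotle c hcR) (abs_nonneg _) hD'0
  have hoffU : -(r * (D' * (W' * C'))) ≤ ∑ c ∈ R \ U, (y c : ℤ) * (∑ i, w i * c i) := by
    have hterm : ∀ c ∈ R \ U, -(D' * (W' * C')) ≤ (y c : ℤ) * (∑ i, w i * c i) := by
      intro c hc
      have h1 := habsterm y c (Finset.mem_sdiff.1 hc).1 (hyRU c hc)
      have h2 := neg_abs_le ((y c : ℤ) * (∑ i, w i * c i))
      linarith
    calc -(r * (D' * (W' * C')))
        ≤ ((R \ U).card : ℤ) * (-(D' * (W' * C'))) := by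
          have hK : 0 ≤ D' * (W' * C') := mul_nonneg hD'0 (mul_nonneg hW'0 hC'0)
          have h5 : ((R \ U).card : ℤ) * (D' * (W' * C')) ≤ r * (D' * (W' * C')) :=
            mul_le_mul_of_nonneg_right hcardU hK
          linarith
      _ = ∑ _c ∈ R \ U, (-(D' * (W' * C'))) := by
          rw [Finset.sum_const, nsmul_eq_mul]
      _ ≤ _ := Finset.sum_le_sum hterm
  have hoffV : ∑ c ∈ R \ V, (z c : ℤ) * (∑ i, w i * c i) ≤ r * (D' * (W' * C')) := by
    have hterm : ∀ c ∈ R \ V, (z c : ℤ) * (∑ i, w i * c i) ≤ D' * (W' * C') := by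
      intro c hc
      have h1 := habsterm z c (Finset.mem_sdiff.1 hc).1 (hzRV c hc)
      have h2 := le_abs_self ((z c : ℤ) * (∑ i, w i * c i))
      linarith
    calc ∑ c ∈ R \ V, (z c : ℤ) * (∑ i, w i * c i)
        ≤ ∑ _c ∈ R \ V, (D' * (W' * C')) := Finset.sum_le_sum hterm
      _ = ((R \ V).card : ℤ) * (D' * (W' * C')) := by
          rw [Finset.sum_const, nsmul_eq_mul]
      _ ≤ r * (D' * (W' * C')) := by
          have hK : 0 ≤ D' * (W' * C') := mul_nonneg hD'0 (mul_nonneg hW'0 hC'0)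
          exact mul_le_mul_of_nonneg_right hcardV hK
  have hdotd : ∑ i, w i * d i ≤ W' * norm1 d := by
    have h1 := le_abs_self (∑ i, w i * d i)
    have h2 := abs_dot_le w d
    have h3 := mul_le_mul_of_nonneg_right hwn (norm1_nonneg d)
    linarith
  -- main inequality on the big parts
  have hmain : ∑ c ∈ U, (y c : ℤ) + ∑ c ∈ V, (z c : ℤ)
      ≤ W' * norm1 d + 2 * r * (D' * (W' * C')) := by
    have := hYZ
    rw [hsplitY, hsplitZ] at this
    linarith
  -- off parts are small
  have hoffUsum : ∑ c ∈ R \ U, (y c : ℤ) ≤ r * D' := by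
    calc ∑ c ∈ R \ U, (y c : ℤ) ≤ ∑ _c ∈ R \ U, D' := Finset.sum_le_sum hyRU
      _ = ((R \ U).card : ℤ) * D' := by rw [Finset.sum_const, nsmul_eq_mul]
      _ ≤ r * D' := mul_le_mul_of_nonneg_right hcardU hD'0
  have hoffVsum : ∑ c ∈ R \ V, (z c : ℤ) ≤ r * D' := by
    calc ∑ c ∈ R \ V, (z c : ℤ) ≤ ∑ _c ∈ R \ V, D' := Finset.sum_le_sum hzRV
      _ = ((R \ V).card : ℤ) * D' := by rw [Finset.sum_const, nsmul_eq_mul]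
      _ ≤ r * D' := mul_le_mul_of_nonneg_right hcardV hD'0
  refine ⟨(y, z), hsup1, hsup2, heqd, ?_⟩
  dsimp only
  have hsplit2 : ∑ c ∈ R, ((y c : ℤ) + (z c : ℤ))
      = (∑ c ∈ R \ U, (y c : ℤ) + ∑ c ∈ U, (y c : ℤ))
        + (∑ c ∈ R \ V, (z c : ℤ) + ∑ c ∈ V, (z c : ℤ)) := by
    rw [Finset.sum_add_distrib, Finset.sum_sdiff hUR, Finset.sum_sdiff hVR]
  rw [hsplit2]
  have hgoal : W' * norm1 d + 2 * r * (D' * (W' * C')) + 2 * (r * D')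
      = W' * norm1 d + 2 * r * D' * (W' * C' + 1) := by ring
  linarith

end KeyBound

section Assemble

variable {n : ℕ}

lemma collect_sum {p : ℕ} (R : Finset (Fin n → ℤ)) (s : Fin p → Fin n → ℤ)
    (hs : ∀ i, s i ∈ R) (lam : Fin p → ℕ) :
    ∑ c ∈ R, ((∑ i, if s i = c then lam i else 0 : ℕ) : ℤ) • c
      = ∑ i, (lam i : ℤ) • s i := by
  classical
  calc ∑ c ∈ R, ((∑ i, if s i = c then lam i else 0 : ℕ) : ℤ) • c
      = ∑ c ∈ R, ∑ i, (if s i = c then (lam i : ℤ) else 0) • c := by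
        refine Finset.sum_congr rfl fun c _ => ?_
        rw [← Finset.sum_smul]
        congr 1
        push_cast
        rfl
    _ = ∑ i, ∑ c ∈ R, (if s i = c then (lam i : ℤ) else 0) • c := Finset.sum_comm
    _ = ∑ i, (lam i : ℤ) • s i := by
        refine Finset.sum_congr rfl fun i _ => ?_
        simp only [ite_smul, zero_smul]
        rw [Finset.sum_ite_eq R (s i) (fun c => (lam i : ℤ) • c)]
        rw [if_pos (hs i)]

lemma expand_back {p : ℕ} (F : Finset (Fin n → ℤ)) (s : Fin p → Fin n → ℤ)
    (y : (Fin n → ℤ) → ℕ) (hrep : ∀ c ∈ F, ∃ i, s i = c) :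
    ∃ lam : Fin p → ℕ, ∑ i, (lam i : ℤ) • s i = ∑ c ∈ F, (y c : ℤ) • c := by
  classical
  choose ρ hρ using hrep
  refine ⟨fun i => ∑ c ∈ F.attach, if ρ c c.2 = i then y c else 0, ?_⟩
  calc ∑ i, ((∑ c ∈ F.attach, if ρ c c.2 = i then y c else 0 : ℕ) : ℤ) • s i
      = ∑ i, ∑ c ∈ F.attach, (if ρ c c.2 = i then (y c : ℤ) else 0) • s i := by
        refine Finset.sum_congr rfl fun i _ => ?_
        rw [← Finset.sum_smul]
        congr 1
        push_cast
        rfl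
    _ = ∑ c ∈ F.attach, ∑ i, (if ρ c c.2 = i then (y c : ℤ) else 0) • s i := Finset.sum_comm
    _ = ∑ c ∈ F.attach, (y c : ℤ) • s (ρ c c.2) := by
        refine Finset.sum_congr rfl fun c _ => ?_
        simp only [ite_smul, zero_smul]
        rw [Finset.sum_ite_eq Finset.univ (ρ c c.2) (fun i => (y (c : Fin n → ℤ) : ℤ) • s i)]
        rw [if_pos (Finset.mem_univ _)]
    _ = ∑ c ∈ F.attach, (y c : ℤ) • (c : Fin n → ℤ) := by
        refine Finset.sum_congr rfl fun c _ => ?_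
        rw [hρ c c.2]
    _ = ∑ c ∈ F, (y c : ℤ) • c := Finset.sum_attach F (fun c => (y c : ℤ) • c)

theorem aux_linear_sets_bound {n : ℕ} (R : Finset (Fin n → ℤ)) :
    ∃ P Q : ℤ, 0 < P ∧ 0 < Q ∧
      ∀ (p q : ℕ) (s : Fin p → Fin n → ℤ) (t : Fin q → Fin n → ℤ),
        (∀ i, s i ∈ R) → (∀ j, t j ∈ R) →
        ∀ s₀ t₀ : Fin n → ℤ,
          (linSet s₀ s ∩ linSet t₀ t).Nonempty →
            ∃ v ∈ linSet s₀ s ∩ linSet t₀ t,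
              norm1 v < P * (norm1 s₀ + norm1 t₀) + Q := by
  classical
  set C' : ℤ := (Cconst R : ℤ) with hC'
  set W' : ℤ := (Wconst R : ℤ) with hW'
  set K₂ : ℤ := 2 * (R.card : ℤ) * (Dconst R : ℤ) * ((Wconst R : ℤ) * (Cconst R : ℤ) + 1)
    with hK₂
  have hC'0 : 0 ≤ C' := Int.natCast_nonneg _
  have hW'0 : 0 ≤ W' := Int.natCast_nonneg _
  have hK₂0 : 0 ≤ K₂ := by
    rw [hK₂]
    positivity
  refine ⟨C' * W' + 1, C' * K₂ + 1, by positivity, by positivity, ?_⟩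
  intro p q s t hs ht s₀ t₀ ⟨v₀, hv₀S, hv₀T⟩
  obtain ⟨lam, hlam⟩ := hv₀S
  obtain ⟨mu, hmu⟩ := hv₀T
  obtain ⟨Simg, hSmem⟩ : ∃ F : Finset (Fin n → ℤ), ∀ c, c ∈ F ↔ (c ∈ R ∧ ∃ i, s i = c) :=
    ⟨R.filter (fun c => ∃ i, s i = c), fun c => Finset.mem_filter⟩
  obtain ⟨Timg, hTmem⟩ : ∃ F : Finset (Fin n → ℤ), ∀ c, c ∈ F ↔ (c ∈ R ∧ ∃ j, t j = c) :=
    ⟨R.filter (fun c => ∃ j, t j = c), fun c => Finset.mem_filter⟩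
  have hSsub : Simg ⊆ R := fun c hc => ((hSmem c).1 hc).1
  have hTsub : Timg ⊆ R := fun c hc => ((hTmem c).1 hc).1
  set d : Fin n → ℤ := t₀ - s₀ with hd
  -- initial solution
  have hne : ∃ yz : ((Fin n → ℤ) → ℕ) × ((Fin n → ℤ) → ℕ),
      (∀ c, yz.1 c ≠ 0 → c ∈ Simg) ∧ (∀ c, yz.2 c ≠ 0 → c ∈ Timg) ∧
      (∑ c ∈ R, (yz.1 c : ℤ) • c) - (∑ c ∈ R, (yz.2 c : ℤ) • c) = d := by
    refine ⟨(fun c => ∑ i, if s i = c then lam i else 0,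
             fun c => ∑ j, if t j = c then mu j else 0), ?_, ?_, ?_⟩
    · intro c hc
      dsimp only at hc
      have : ∃ i, (if s i = c then lam i else 0) ≠ 0 := by
        by_contra hall
        push_neg at hall
        exact hc (Finset.sum_eq_zero fun i _ => hall i)
      obtain ⟨i, hi⟩ := this
      have hsi : s i = c := by
        by_contra hne'
        rw [if_neg hne'] at hi
        exact hi rfl
      exact (hSmem c).2 ⟨hsi ▸ hs i, ⟨i, hsi⟩⟩
    · intro c hc
      dsimp only at hc
      have : ∃ j, (if t j = c then mu j else 0) ≠ 0 := by
        by_contra hall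
        push_neg at hall
        exact hc (Finset.sum_eq_zero fun j _ => hall j)
      obtain ⟨j, hj⟩ := this
      have htj : t j = c := by
        by_contra hne'
        rw [if_neg hne'] at hj
        exact hj rfl
      exact (hTmem c).2 ⟨htj ▸ ht j, ⟨j, htj⟩⟩
    · dsimp only
      rw [collect_sum R s hs lam, collect_sum R t ht mu]
      have h1 : ∑ i, (lam i : ℤ) • s i = v₀ - s₀ := by rw [hlam]; ring
      have h2 : ∑ j, (mu j : ℤ) • t j = v₀ - t₀ := by rw [hmu]; ring
      rw [h1, h2, hd]
      ring
  obtain ⟨⟨y, z⟩, hy1, hy2, heq, hbound⟩ := key_bound R Simg Timg hSsub hTsub d hne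
  dsimp only at hy1 hy2 heq hbound
  -- the small common point
  set v : Fin n → ℤ := s₀ + ∑ c ∈ R, (y c : ℤ) • c with hv
  have hrestrY : ∑ c ∈ R, (y c : ℤ) • c = ∑ c ∈ Simg, (y c : ℤ) • c := by
    refine (Finset.sum_subset hSsub fun c _ hcS => ?_).symm
    have : y c = 0 := by
      by_contra hne'
      exact hcS (hy1 c hne')
    rw [this, Nat.cast_zero, zero_smul]
  have hrestrZ : ∑ c ∈ R, (z c : ℤ) • c = ∑ c ∈ Timg, (z c : ℤ) • c := by
    refine (Finset.sum_subset hTsub fun c _ hcT => ?_).symm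
    have : z c = 0 := by
      by_contra hne'
      exact hcT (hy2 c hne')
    rw [this, Nat.cast_zero, zero_smul]
  have hvS : v ∈ linSet s₀ s := by
    obtain ⟨lam', hlam'⟩ := expand_back Simg s y (fun c hc => ((hSmem c).1 hc).2)
    exact ⟨lam', by rw [hv, hrestrY, hlam']⟩
  have hvT : v ∈ linSet t₀ t := by
    obtain ⟨mu', hmu'⟩ := expand_back Timg t z (fun c hc => ((hTmem c).1 hc).2)
    refine ⟨mu', ?_⟩
    have hveq : v = t₀ + ∑ c ∈ R, (z c : ℤ) • c := by
      rw [hv]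
      have : (∑ c ∈ R, (y c : ℤ) • c) - (∑ c ∈ R, (z c : ℤ) • c) = t₀ - s₀ := by
        rw [heq, hd]
      linear_combination this
    rw [hveq, hrestrZ, hmu']
  refine ⟨v, ⟨hvS, hvT⟩, ?_⟩
  -- norm estimate
  have hstep1 : norm1 v ≤ norm1 s₀ + ∑ c ∈ R, (y c : ℤ) * norm1 c := by
    refine le_trans (norm1_add_le s₀ _) ?_
    exact add_le_add_right (norm1_sum_smul_le R y) _
  have hstep2 : ∑ c ∈ R, (y c : ℤ) * norm1 c ≤ C' * ∑ c ∈ R, ((y c : ℤ) + (z c : ℤ)) := by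
    calc ∑ c ∈ R, (y c : ℤ) * norm1 c
        ≤ ∑ c ∈ R, (y c : ℤ) * C' := Finset.sum_le_sum fun c hc =>
          mul_le_mul_of_nonneg_left (by rw [hC']; exact norm1_le_C hc) (Int.natCast_nonneg _)
      _ = C' * ∑ c ∈ R, (y c : ℤ) := by rw [Finset.mul_sum]; exact Finset.sum_congr rfl fun c _ => mul_comm _ _
      _ ≤ C' * ∑ c ∈ R, ((y c : ℤ) + (z c : ℤ)) := by
          refine mul_le_mul_of_nonneg_left ?_ hC'0
          exact Finset.sum_le_sum fun c _ => by
            have := Int.natCast_nonneg (z c); linarith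
  have hstep3 : C' * ∑ c ∈ R, ((y c : ℤ) + (z c : ℤ)) ≤ C' * (W' * norm1 d + K₂) := by
    refine mul_le_mul_of_nonneg_left ?_ hC'0
    calc ∑ c ∈ R, ((y c : ℤ) + (z c : ℤ))
        ≤ (Wconst R : ℤ) * norm1 d
          + 2 * (R.card : ℤ) * (Dconst R : ℤ) * ((Wconst R : ℤ) * (Cconst R : ℤ) + 1) := hbound
      _ = W' * norm1 d + K₂ := by rw [hW', hK₂]
  have hdnorm : norm1 d ≤ norm1 s₀ + norm1 t₀ := by
    rw [hd]
    have := norm1_sub_le t₀ s₀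
    linarith
  have hprod : C' * (W' * norm1 d + K₂) ≤ C' * W' * (norm1 s₀ + norm1 t₀) + C' * K₂ := by
    have h1 : C' * W' * norm1 d ≤ C' * W' * (norm1 s₀ + norm1 t₀) :=
      mul_le_mul_of_nonneg_left hdnorm (mul_nonneg hC'0 hW'0)
    nlinarith [hC'0]
  have hs₀ : norm1 s₀ ≤ norm1 s₀ + norm1 t₀ := by
    have := norm1_nonneg t₀; linarith
  have hring : (C' * W' + 1) * (norm1 s₀ + norm1 t₀) + (C' * K₂ + 1)
      = C' * W' * (norm1 s₀ + norm1 t₀) + (norm1 s₀ + norm1 t₀) + C' * K₂ + 1 := by ring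
  linarith

end Assemble


/-- Corollary 3.3: for a finite set R of vectors in ℤ^n there are constants P, Q > 0 such
that any two linear sets whose generating vectors lie in R either do not intersect
or have a common element of norm less than P(|s₀| + |t₀|) + Q. -/
theorem linear_sets_intersection_bound_finset {n : ℕ} (R : Finset (Fin n → ℤ)) :
    ∃ P Q : ℤ, 0 < P ∧ 0 < Q ∧
      ∀ (p q : ℕ) (s : Fin p → Fin n → ℤ) (t : Fin q → Fin n → ℤ),
        (∀ i, s i ∈ R) → (∀ j, t j ∈ R) →
        ∀ s₀ t₀ : Fin n → ℤ,
          (linSet s₀ s ∩ linSet t₀ t).Nonempty →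
            ∃ v ∈ linSet s₀ s ∩ linSet t₀ t,
              norm1 v < P * (norm1 s₀ + norm1 t₀) + Q := by
  exact aux_linear_sets_bound R
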